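/- Grading law for nontrivial bimodule relation terms (Lemma 6.5): let (w; b_k, …, b₁, x, a₁, …, a_n) be a weighted input sequence for the AA-bimodule Y. If some single-edge modification of the sequence — a pull (replacing an adjacent pair on one side by its algebra operation value), a push (removing one weight letter w_i from w and inserting the corresponding element: U_i on the A-side for 1 ≤ i ≤ N+1, or U₀ on the B-side for w₀), a differential (replacing some b_m by a term of μ₁(b_m)), or a split (factoring the sequence as a composition of two bimodule operations with weights summing to w) — yields a nonzero bimodule operation (respectively a composition of nonzero bimodule operations), then m(w) + Σ_{i=1}^{n} m(a_i) + Σ_{i=1}^{k} m(b_i) + k + n − 1 = 1. -/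

import Mathlib

open scoped Classical

noncomputable section

namespace StarPaper

/-- The ground ring `R = F₂[V₀, V₁, …, V_{N+1}]`. -/
abbrev R (N : ℕ) := MvPolynomial (Fin (N + 2)) (ZMod 2)

/-- The variable `V₀`. -/
def V0 (N : ℕ) : R N := MvPolynomial.X 0

/-- The variable `V_{i}` for an index `i` counted mod `N` (so `1 ≤ i ≤ N`). -/
def Vof (N : ℕ) (z : ZMod N) : R N := MvPolynomial.X (Fin.ofNat (N + 2) (z.val + 1 : ℕ))

/-- The variable `V_{N+1}`. -/
def VN1 (N : ℕ) : R N := MvPolynomial.X (Fin.ofNat (N + 2) (N + 1 : ℕ))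

/-- The Alexander grading group `ℤ^{2N}`, with coordinates indexed by
`(i, false) ↔ ē_{2i-1}` (the `U`/odd slots) and `(i, true) ↔ ē_{2i}` (the `s`/even slots). -/
abbrev Gr (N : ℕ) := ZMod N × Bool → ℤ

/-- The standard basis vector of the Alexander grading group. -/
def gsl {N : ℕ} (p : ZMod N × Bool) : Gr N := fun x => if x = p then 1 else 0

/-- The constant grading vector `j · Σ_{k=1}^{2N} ē_k`. -/
def constG (N : ℕ) (j : ℕ) : Gr N := fun _ => (j : ℤ)

/-! ### The star algebra `A` -/

/-- Basis words of the star algebra `A`: the idempotents `e_i`, the powers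
`U i p = U_i^{p+1}`, and the words `S i l = s_i s_{i+1} ⋯ s_{i+l}`. -/
inductive AWord (N : ℕ) : Type
  | idem (i : ZMod N)
  | U (i : ZMod N) (p : ℕ)
  | S (i : ZMod N) (l : ℕ)
  deriving DecidableEq

instance (N : ℕ) : Inhabited (AWord N) := ⟨AWord.idem 0⟩

namespace AWord
variable {N : ℕ}

/-- Initial idempotent of a word. -/
def initI : AWord N → ZMod N
  | idem i => i
  | U i _ => i
  | S i _ => i

/-- Final idempotent of a word. -/
def finI : AWord N → ZMod N
  | idem i => i
  | U i _ => i
  | S i l => i + ((l + 1 : ℕ) : ZMod N)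

/-- Multiplication of basis words of `A`; `none` means the product is zero.
This encodes the relations `U_i s_i = 0`, `s_i U_{i+1} = 0`, orthogonality of the
idempotents, and concatenation of `s`-words and of `U`-powers. -/
def mulW : AWord N → AWord N → Option (AWord N)
  | idem i, idem j => if i = j then some (idem i) else none
  | idem i, U j p => if i = j then some (U j p) else none
  | idem i, S j l => if i = j then some (S j l) else none
  | U i p, idem j => if j = i then some (U i p) else none
  | U i p, U j q => if i = j then some (U i (p + q + 1)) else none
  | U _ _, S _ _ => none
  | S i l, idem j => if j = i + ((l + 1 : ℕ) : ZMod N) then some (S i l) else none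
  | S _ _, U _ _ => none
  | S i l, S j m => if j = i + ((l + 1 : ℕ) : ZMod N) then some (S i (l + m + 1)) else none

/-- A word is basic if it is a single generator `U_i` or `s_i`. -/
def isBasic : AWord N → Prop
  | idem _ => False
  | U _ p => p = 0
  | S _ l => l = 0

/-- A word is extended if it is a product of at least two basic generators. -/
def isExt : AWord N → Prop
  | idem _ => False
  | U _ p => 1 ≤ p
  | S _ l => 1 ≤ l

/-- For an extended word `a₁`, the word `a₁'` with `a₁ = a₁' · (basic letter)`. -/
def lTr : AWord N → AWord N
  | idem i => idem i
  | U i p => U i (p - 1)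
  | S i l => S i (l - 1)

/-- For an extended word `a_n`, the word `a_n'` with `a_n = (basic letter) · a_n'`. -/
def rTr : AWord N → AWord N
  | idem i => idem i
  | U i p => U i (p - 1)
  | S i l => S (i + 1) (l - 1)

/-- Is the word an idempotent? -/
def isIdem : AWord N → Prop
  | idem _ => True
  | _ => False

end AWord

/-- The Alexander grading of a word of `A`: `A(U_i) = ē_{2i-1}`, `A(s_i) = ē_{2i}`,
extended additively over the letters of a word. -/
def alexA {N : ℕ} : AWord N → Gr N
  | .idem _ => 0
  | .U i p => ((p : ℤ) + 1) • gsl (i, false)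
  | .S i l => ∑ t ∈ Finset.range (l + 1), gsl ((i + (t : ZMod N), true))

/-- The free `R`-module underlying `A`, with basis the words. -/
abbrev AMod (N : ℕ) := AWord N →₀ R N

/-- A basis word viewed as an element of `A`. -/
def ofA {N : ℕ} (w : AWord N) : AMod N := Finsupp.single w 1

/-- Total Alexander grading of a sequence of words. -/
def alexSum {N : ℕ} (l : List (AWord N)) : Gr N := (l.map alexA).sum

/-- Consecutive idempotents compose. -/
def chainA {N : ℕ} (l : List (AWord N)) : Prop :=
  l.Chain' (fun x y => x.finI = y.initI)

/-- Centered sequence together with its Alexander condition (iv), with parameter `j`. -/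
def centC {N : ℕ} (l : List (AWord N)) (j : ℕ) : Prop :=
  l.headI.isBasic ∧ l.getLastI.isBasic ∧ alexSum l = constG N j

/-- Left-extended sequence together with its Alexander condition (iv), parameter `j`. -/
def leftC {N : ℕ} (l : List (AWord N)) (j : ℕ) : Prop :=
  l.headI.isExt ∧ l.getLastI.isBasic ∧ alexSum l = alexA l.headI.lTr + constG N j

/-- Right-extended sequence together with its Alexander condition (iv), parameter `j`. -/
def rightC {N : ℕ} (l : List (AWord N)) (j : ℕ) : Prop :=
  l.headI.isBasic ∧ l.getLastI.isExt ∧ alexSum l = alexA l.getLastI.rTr + constG N j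

/-- The unweighted operations `μ_n` of `A` on sequences of basis words:
`μ₂` is the multiplication, `μ₀ = μ₁ = 0`, and for `n > 2` the operation is nonzero
exactly when conditions (i)–(iv) hold, with value prescribed by condition (v). -/
def muU (N : ℕ) (l : List (AWord N)) : AMod N :=
  if l.length = 2 then (AWord.mulW l.headI l.getLastI).elim 0 ofA
  else if 2 < l.length ∧ chainA l ∧
      (∃ j, 1 ≤ j ∧ l.length = j * (2 * N - 2) + 2 ∧ (centC l j ∨ leftC l j ∨ rightC l j)) then
    (V0 N ^ ((l.length - 2) / (2 * N - 2))) •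
      (if l.headI.isExt then ofA l.headI.lTr
       else if l.getLastI.isExt then ofA l.getLastI.rTr
       else ofA (.idem l.getLastI.finI))
  else 0

/-! ### Weighted operations on `A` -/

/-- A weight: an `ℕ`-linear combination of the basis weight vectors
`w₁, …, w_N` (the petal weights, indexed mod `N`) and `w_{N+1}` (the central weight). -/
abbrev WtA (N : ℕ) := (ZMod N →₀ ℕ) × ℕ

/-- Total magnitude `|w|` of a weight. -/
def wsize {N : ℕ} (w : WtA N) : ℕ := w.1.sum (fun _ k => k) + w.2

/-- Alexander grading of a weight: `A(w_i) = ē_{2i-1}` for `1 ≤ i ≤ N`,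
`A(w_{N+1}) = Σ_{k=1}^N ē_{2k}`, extended additively. -/
def alexWt {N : ℕ} (w : WtA N) : Gr N :=
  fun x => if x.2 then (w.2 : ℤ) else (w.1 x.1 : ℤ)

/-- Weighted centered condition with parameter `j`. -/
def wCent {N : ℕ} (w : WtA N) (l : List (AWord N)) (j : ℕ) : Prop :=
  alexWt w + alexSum l = constG N j

/-- Weighted left-extended condition: there is a (non-idempotent) offset `α` on the
left end, `a₁ = α·a₁'`, with the corresponding Alexander condition for parameter `j`. -/
def wLeft {N : ℕ} (w : WtA N) (l : List (AWord N)) (j : ℕ) : Prop :=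
  ∃ α : AWord N, ¬ α.isIdem ∧ ∃ a', AWord.mulW α a' = some l.headI ∧
    alexWt w + alexA a' + alexSum l.tail = constG N j

/-- Weighted right-extended condition: offset `α` on the right end, `a_n = a_n'·α`. -/
def wRight {N : ℕ} (w : WtA N) (l : List (AWord N)) (j : ℕ) : Prop :=
  ∃ α : AWord N, ¬ α.isIdem ∧ ∃ a', AWord.mulW a' α = some l.getLastI ∧
    alexWt w + alexSum l.dropLast + alexA a' = constG N j

/-- The element `U_{N+1} = Σ_{i=1}^N s_i s_{i+1} ⋯ s_{i+N-1}`. -/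
def UN1elt (N : ℕ) : AMod N := ∑ i ∈ Finset.range N, ofA (.S (i : ZMod N) (N - 1))

/-- The weighted curvature terms: `μ₀^{w_i} = U_i` for `1 ≤ i ≤ N`,
`μ₀^{w_{N+1}} = U_{N+1}`, and zero for all other weights. -/
def mu0A (N : ℕ) (w : WtA N) : AMod N :=
  if h : ∃ i : ZMod N, w = (Finsupp.single i 1, 0) then ofA (.U h.choose 0)
  else if w = (0, 1) then UN1elt N
  else 0

/-- The combined weighted/unweighted condition (centered, or an offset on exactly
one end) with parameter `j`, as in the definition of the weighted operations. -/
def wCond {N : ℕ} (w : WtA N) (l : List (AWord N)) (j : ℕ) : Prop :=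
  wCent w l j ∨ (wLeft w l j ∧ ¬ wRight w l j) ∨ (wRight w l j ∧ ¬ wLeft w l j)

/-- The weighted operations `μ_n^w` of `A`.  For `w = 0` these are the unweighted
operations; `μ₀^w` is the weighted curvature; and for `w ≠ 0`, `n ≥ 1`, the operation
is nonzero exactly when the conditions of the weighted characterization hold,
with the prescribed value (`V₀^j` times an idempotent in the centered case,
`α·V₀^j` in the extended cases). -/
def muW (N : ℕ) (w : WtA N) (l : List (AWord N)) : AMod N :=
  if w = 0 then muU N l
  else if l = [] then mu0A N w
  else if _h : chainA l ∧ ∃ j, l.length + 2 * wsize w = j * (2 * N - 2) + 2 ∧ wCond w l j then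
    (V0 N ^ ((l.length + 2 * wsize w - 2) / (2 * N - 2))) •
      (if wCent w l ((l.length + 2 * wsize w - 2) / (2 * N - 2)) then
        ofA (.idem l.getLastI.finI)
       else if hl : wLeft w l ((l.length + 2 * wsize w - 2) / (2 * N - 2)) then ofA hl.choose
       else if hr : wRight w l ((l.length + 2 * wsize w - 2) / (2 * N - 2)) then ofA hr.choose
       else 0)
  else 0

/-! ### The dual algebra `B` -/

/-- Basis words of the dual algebra `B`: idempotents `ι_i`, lone letters `ρ_i`, and
strictly alternating words `gen i l r lf` with `l+1` σ-letters `σ_i, …, σ_{i+l}`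
(composed right-to-left), all interior ρ-letters present, an optional right flanking
`ρ_i` (`r`) and an optional left flanking `ρ_{i+l+1}` (`lf`). -/
inductive BWord (N : ℕ) : Type
  | idem (i : ZMod N)
  | rho (i : ZMod N)
  | gen (i : ZMod N) (l : ℕ) (r : Bool) (lf : Bool)
  deriving DecidableEq

instance (N : ℕ) : Inhabited (BWord N) := ⟨BWord.idem 0⟩

namespace BWord
variable {N : ℕ}

/-- Initial (rightmost) idempotent. -/
def initB : BWord N → ZMod N
  | idem i => i
  | rho i => i
  | gen i _ _ _ => i

/-- Final (leftmost) idempotent. -/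
def finB : BWord N → ZMod N
  | idem i => i
  | rho i => i
  | gen i l _ _ => i + ((l + 1 : ℕ) : ZMod N)

/-- The length `ℓ(τ)`: the number of σ-letters. -/
def lenB : BWord N → ℕ
  | gen _ l _ _ => l + 1
  | _ => 0

/-- Right-flanked: the rightmost letter is a `ρ`. -/
def rFl : BWord N → Prop
  | gen _ _ r _ => r = true
  | rho _ => True
  | idem _ => False

/-- Left-flanked: the leftmost letter is a `ρ`. -/
def lFl : BWord N → Prop
  | gen _ _ _ lf => lf = true
  | rho _ => True
  | idem _ => False

/-- Multiplication of basis words of `B` (right-to-left composition, so `mulB x y = x·y`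
with `y` acting first); `none` means the product is zero.  This encodes the relations
`ρρ = 0` and `σσ = 0`. -/
def mulB : BWord N → BWord N → Option (BWord N)
  | idem i, idem j => if i = j then some (idem i) else none
  | idem i, rho j => if i = j then some (rho j) else none
  | idem i, gen j l r lf => if i = j + ((l + 1 : ℕ) : ZMod N) then some (gen j l r lf) else none
  | rho i, idem j => if i = j then some (rho i) else none
  | rho _, rho _ => none
  | rho i, gen j l r lf =>
      if i = j + ((l + 1 : ℕ) : ZMod N) ∧ lf = false then some (gen j l r true) else none
  | gen i l r lf, idem j => if j = i then some (gen i l r lf) else none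
  | gen i l r lf, rho j => if j = i ∧ r = false then some (gen i l true lf) else none
  | gen i' l' r' lf', gen i l r lf =>
      if i' = i + ((l + 1 : ℕ) : ZMod N) ∧ (lf ≠ r') then some (gen i (l + l' + 1) r lf')
      else none

end BWord

/-- The free `R`-module underlying `B`, with basis the words. -/
abbrev BMod (N : ℕ) := BWord N →₀ R N

/-- A basis word viewed as an element of `B`. -/
def ofB {N : ℕ} (w : BWord N) : BMod N := Finsupp.single w 1

/-- The full differential `μ₁` of `B` on basis words: the Leibniz differential
(`μ₁ρ_i = V_i`, `μ₁σ_i = 0`; only flanking ρ-letters contribute) for length `< N`,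
together with the window-cutting terms in the length `≥ N` cases, according to the
four flanking cases. -/
def mu1W (N : ℕ) : BWord N → BMod N
  | .idem _ => 0
  | .rho i => Vof N i • ofB (.idem i)
  | .gen i l r lf =>
      (if r then Vof N i • ofB (.gen i l false lf) else 0)
      + (if lf then Vof N (i + ((l + 1 : ℕ) : ZMod N)) • ofB (.gen i l r false) else 0)
      + (if N ≤ l + 1 ∧ lf = false then
          (VN1 N * ∏ t ∈ Finset.range (N - 1), Vof N (i + ((l + 2 - N + t : ℕ) : ZMod N))) •
            (if N ≤ l then ofB (.gen i (l - N) r true)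
             else if r then ofB (.rho i) else ofB (.idem i))
         else 0)
      + (if N ≤ l + 1 ∧ r = false then
          (VN1 N * ∏ t ∈ Finset.range (N - 1), Vof N (i + ((t + 1 : ℕ) : ZMod N))) •
            (if N ≤ l then ofB (.gen (i + (N : ZMod N)) (l - N) true lf)
             else if lf then ofB (.rho (i + (N : ZMod N))) else ofB (.idem (i + (N : ZMod N))))
         else 0)

/-- The differential `μ₁`, extended `R`-linearly to all of `B`. -/
def mu1M (N : ℕ) (x : BMod N) : BMod N := x.sum fun w c => c • mu1W N w

/-- Total length of a composable sequence of words (the list is written in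
composition order `[τ₁, …, τ_k]`). -/
def totB {N : ℕ} (l : List (BWord N)) : ℕ := (l.map BWord.lenB).sum

/-- Consecutive inputs compose (`(τ_k, …, τ₁)` is written `[τ₁, …, τ_k]`). -/
def chainB {N : ℕ} (l : List (BWord N)) : Prop :=
  l.Chain' (fun x y => x.finB = y.initB)

/-- Condition (S1): some proper top part `(τ_k, …, τ_m)`, `m > 1`, has total length `≥ N`. -/
def S1 (N : ℕ) (l : List (BWord N)) : Prop :=
  ∃ m, 1 ≤ m ∧ m < l.length ∧ N ≤ totB (l.drop m)

/-- Condition (S2): some proper bottom part `(τ_m, …, τ₁)`, `m < k`, has total length `≥ N`. -/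
def S2 (N : ℕ) (l : List (BWord N)) : Prop :=
  ∃ m, 1 ≤ m ∧ m < l.length ∧ N ≤ totB (l.take m)

/-- The product of the variables `V_λ` over the interior ρ-letters of a word. -/
def intProd (N : ℕ) : BWord N → R N
  | .gen i l _ _ => ∏ t ∈ Finset.range l, Vof N (i + ((t + 1 : ℕ) : ZMod N))
  | _ => 1

/-- Shape conditions on the terms of an allowable sequence: interior terms begin and
end with a σ-letter, `τ₁` begins with a σ (possibly ending with a ρ), and `τ_k` ends
with a σ (possibly beginning with a ρ). -/
def endsOK (N : ℕ) (l : List (BWord N)) : Prop :=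
  (∃ i li r, l.headI = BWord.gen i li r false) ∧
  (∃ i li lf, l.getLastI = BWord.gen i li false lf) ∧
  (∀ m, 0 < m → m + 1 < l.length → ∃ i li, l[m]? = some (BWord.gen i li false false))

/-- Allowable sequences (for the high-length products `μ_k`, `2 ≤ k ≤ N`). -/
def allow (N : ℕ) (l : List (BWord N)) : Prop :=
  2 ≤ l.length ∧ l.length ≤ N ∧ chainB l ∧ N ≤ totB l ∧
  ¬(S1 N l ∧ S2 N l) ∧
  ¬(l.getLastI.lFl ∧ S2 N l ∧ ¬ S1 N l) ∧
  ¬(l.headI.rFl ∧ S1 N l ∧ ¬ S2 N l) ∧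
  ¬(l.getLastI.lFl ∧ l.headI.rFl) ∧
  endsOK N l

/-- The bottom-cut term: the window of the bottom `N` σ-steps is swept out and
converted into `V_{N+1}·∏{V_λ}`, leaving the remaining top factor of `τ_k`. -/
def botTerm (N : ℕ) (l : List (BWord N)) : BMod N :=
  match l.getLastI with
  | .gen ik lk _ lfk =>
    if 1 ≤ N - totB l.dropLast ∧ N - totB l.dropLast ≤ lk then
      (VN1 N * ((l.dropLast.map (intProd N)).prod) *
        ∏ t ∈ Finset.range (N - totB l.dropLast - 1), Vof N (ik + ((t + 1 : ℕ) : ZMod N))) •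
        ofB (.gen (ik + ((N - totB l.dropLast : ℕ) : ZMod N)) (lk - (N - totB l.dropLast))
              true lfk)
    else 0
  | _ => 0

/-- The top-cut term: the window of the top `N` σ-steps is swept out, leaving the
remaining bottom factor of `τ₁`. -/
def topTerm (N : ℕ) (l : List (BWord N)) : BMod N :=
  match l.headI with
  | .gen i1 l1 r1 _ =>
    if 1 ≤ N - totB l.tail ∧ N - totB l.tail ≤ l1 then
      (VN1 N * ((l.tail.map (intProd N)).prod) *
        ∏ t ∈ Finset.range (N - totB l.tail - 1),
          Vof N (i1 + ((l1 + 1 - (N - totB l.tail) + t + 1 : ℕ) : ZMod N))) •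
        ofB (.gen i1 (l1 - (N - totB l.tail)) r1 true)
    else 0
  | _ => 0

/-- The value of a high-length product on an allowable sequence: for total length `N`
there is a single cut; for total length `> N`, the sum of the bottom-cut and top-cut
terms over the permitted cut directions (never counting from a flanked or
stretching-too-far end). -/
def highVal (N : ℕ) (l : List (BWord N)) : BMod N :=
  if totB l = N then
    (VN1 N * (l.map (intProd N)).prod) •
      ofB (if l.getLastI.lFl ∨ l.headI.rFl then BWord.rho l.headI.initB
           else BWord.idem l.headI.initB)
  else
    (if ¬ S2 N l ∧ ¬ l.headI.rFl then botTerm N l else 0)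
    + (if ¬ S1 N l ∧ ¬ l.getLastI.lFl then topTerm N l else 0)

/-- The operations `μ_k` of `B` on sequences of basis words (the list is in composition
order `[τ₁, …, τ_k]`): `μ₁` is the full differential, `μ₂` is the concatenation product
together with the high-length binary products, `μ_k` for `2 ≤ k ≤ N` the high-length
products on allowable sequences, and all other operations vanish. -/
def muB (N : ℕ) (l : List (BWord N)) : BMod N :=
  if l.length = 1 then mu1W N l.headI
  else if 2 ≤ l.length then
    (if l.length = 2 then (BWord.mulB l.getLastI l.headI).elim 0 ofB else 0)
    + (if allow N l then highVal N l else 0)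
  else 0

/-! ### Gradings -/

/-- Maslov grading of a basis word of `B` (`m(ρ_i) = m(σ_i) = -1`). -/
def mB {N : ℕ} : BWord N → ℤ
  | .idem _ => 0
  | .rho _ => -1
  | .gen _ l r lf => -(2 * (l : ℤ) + 1) - (if r then 1 else 0) - (if lf then 1 else 0)

/-- Alexander grading of a basis word of `B` (`A(ρ_i) = ē_{2i-1}`, `A(σ_i) = ē_{2i}`). -/
def alexB {N : ℕ} : BWord N → Gr N
  | .idem _ => 0
  | .rho i => gsl (i, false)
  | .gen i l r lf =>
      (∑ t ∈ Finset.range (l + 1), gsl ((i + (t : ZMod N), true)))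
      + (∑ t ∈ Finset.range l, gsl ((i + ((t + 1 : ℕ) : ZMod N), false)))
      + (if r then gsl (i, false) else 0)
      + (if lf then gsl ((i + ((l + 1 : ℕ) : ZMod N), false)) else 0)

/-- Maslov grading of a variable: `m(V₀) = 2N-2`, `m(V_i) = -2` for `1 ≤ i ≤ N+1`. -/
def mdegVar (N : ℕ) (idx : Fin (N + 2)) : ℤ :=
  if (idx : ℕ) = 0 then 2 * (N : ℤ) - 2 else -2

/-- Maslov grading of a monomial in the variables `V₀, …, V_{N+1}`. -/
def mdeg (N : ℕ) (v : Fin (N + 2) →₀ ℕ) : ℤ := v.sum fun idx e => (e : ℤ) * mdegVar N idx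

/-- Alexander grading of a variable. -/
def alexVar (N : ℕ) (idx : Fin (N + 2)) : Gr N :=
  if (idx : ℕ) = 0 then (fun _ => 1)
  else if (idx : ℕ) = N + 1 then (fun x => if x.2 then 1 else 0)
  else gsl (((((idx : ℕ) - 1 : ℕ)) : ZMod N), false)

/-- Alexander grading of a monomial in the variables. -/
def alexMon (N : ℕ) (v : Fin (N + 2) →₀ ℕ) : Gr N :=
  v.sum fun idx e => (e : ℤ) • alexVar N idx

/-! ### The AA-bimodule `Y` -/

/-- Monomials in the variables `V₀, …, V_{N+1}` (exponent vectors). -/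
abbrev Mon (N : ℕ) := Fin (N + 2) →₀ ℕ

/-- An input on the `A`-side: a monomial `V`-factor together with a basis word of `A`
(these are exactly the `F₂`-basis elements of `A`). -/
abbrev AInp (N : ℕ) := Mon N × AWord N

/-- An input on the `B`-side. -/
abbrev BInp (N : ℕ) := Mon N × BWord N

/-- A weight for the bimodule `Y`: `(q, pet, top)` records `q` copies of `w₀`,
the petal multiplicities of `w₁, …, w_N`, and the multiplicity of `w_{N+1}`. -/
abbrev Wt (N : ℕ) := ℕ × (ZMod N →₀ ℕ) × ℕ

/-- The bimodule `Y` over `F₂`: free on the generators `x₁, …, x_N` (indexed mod `N`). -/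
abbrev YF (N : ℕ) := ZMod N →₀ ZMod 2

/-- `A` as an `F₂`-vector space with basis the decorated words. -/
abbrev AF (N : ℕ) := AInp N →₀ ZMod 2

/-- `B` as an `F₂`-vector space with basis the decorated words. -/
abbrev BF (N : ℕ) := BInp N →₀ ZMod 2

/-- Maslov grading of a bimodule weight: `m(w₀) = -(2N-2)`, `m(w_i) = 2`. -/
def mWt (N : ℕ) (w : Wt N) : ℤ :=
  -(2 * (N : ℤ) - 2) * w.1 + 2 * (w.2.1.sum fun _ k => (k : ℤ)) + 2 * w.2.2

/-- Alexander grading of a bimodule weight: `A(w₀) = Σ_{k=1}^{2N} ē_k`,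
`A(w_i) = ē_{2i-1}`, `A(w_{N+1}) = Σ ē_{2k}`. -/
def alexWt3 (N : ℕ) (w : Wt N) : Gr N :=
  fun x => if x.2 then ((w.1 : ℤ) + (w.2.2 : ℤ)) else ((w.1 : ℤ) + (w.2.1 x.1 : ℤ))

/-- `A`-side letters of a weighted input sequence: the basic letters of the `a`-inputs
(`V`-factors included as letters `V_idx`) together with the weight letters
`w₁, …, w_{N+1}`. -/
inductive ASide (N : ℕ)
  | uL (i : ZMod N)
  | sL (i : ZMod N)
  | vL (idx : Fin (N + 2))
  | wPet (i : ZMod N)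
  | wTop
  deriving DecidableEq

/-- `B`-side letters: the basic letters of the `b`-inputs (`V`-factors included)
together with the weight letters `w₀`. -/
inductive BSide (N : ℕ)
  | rL (i : ZMod N)
  | gL (i : ZMod N)
  | vL (idx : Fin (N + 2))
  | w0
  deriving DecidableEq

/-- Which pairs of letters the matching may pair: the pairing preserves the Alexander
grading, never pairs a weight letter with a weight letter, pairs each `V_i`-letter only
with the weight `w_i`, and pairs each weight `w_i` (`1 ≤ i ≤ N`) only with a `V_i`- or
`ρ_i`-letter and `w₀`, `w_{N+1}` only with `V₀`-, `V_{N+1}`-letters respectively. -/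
def compat {N : ℕ} : ASide N → BSide N → Prop
  | .uL i, .rL j => i = j
  | .sL i, .gL j => i = j
  | .vL idx, .w0 => (idx : ℕ) = 0
  | .wPet i, .rL j => i = j
  | .wPet i, .vL idx => (idx : ℕ) = i.val + 1
  | .wTop, .vL idx => (idx : ℕ) = N + 1
  | _, _ => False

/-- The `V`-letters of a monomial factor (`A`-side). -/
def monLettersA (N : ℕ) (v : Mon N) : List (ASide N) :=
  (List.finRange (N + 2)).flatMap fun idx => List.replicate (v idx) (ASide.vL idx)

/-- The basic letters of a word of `A`, in order. -/
def wordLettersA {N : ℕ} : AWord N → List (ASide N)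
  | .idem _ => []
  | .U i p => List.replicate (p + 1) (ASide.uL i)
  | .S i l => (List.range (l + 1)).map fun t => ASide.sL (i + (t : ZMod N))

/-- All `A`-side letters of an `A`-input. -/
def lettersA {N : ℕ} (a : AInp N) : List (ASide N) := monLettersA N a.1 ++ wordLettersA a.2

/-- The `V`-letters of a monomial factor (`B`-side). -/
def monLettersB (N : ℕ) (v : Mon N) : List (BSide N) :=
  (List.finRange (N + 2)).flatMap fun idx => List.replicate (v idx) (BSide.vL idx)

/-- The basic letters of a word of `B`, in (right-to-left) order. -/
def wordLettersB {N : ℕ} : BWord N → List (BSide N)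
  | .idem _ => []
  | .rho i => [BSide.rL i]
  | .gen i l r lf =>
      (if r then [BSide.rL i] else []) ++
      ((List.range (l + 1)).flatMap fun t =>
        (if t = 0 then [] else [BSide.rL (i + (t : ZMod N))]) ++ [BSide.gL (i + (t : ZMod N))]) ++
      (if lf then [BSide.rL (i + ((l + 1 : ℕ) : ZMod N))] else [])

/-- All `B`-side letters of a `B`-input. -/
def lettersB {N : ℕ} (b : BInp N) : List (BSide N) := monLettersB N b.1 ++ wordLettersB b.2

/-- Algebra-letter part of an `A`-side letter (weight letters are dropped). -/
def algA {N : ℕ} : ASide N → Option (ASide N)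
  | .wPet _ => none
  | .wTop => none
  | x => some x

/-- Algebra-letter part of a `B`-side letter. -/
def algB {N : ℕ} : BSide N → Option (BSide N)
  | .w0 => none
  | x => some x

/-- The weighted input sequence admits a matching: there is a common list of compatible
pairs whose `A`-side algebra letters are exactly those of the `a`-inputs in order, whose
`A`-side weight letters are exactly those of the weight, and similarly on the `B`-side
(so the pairing restricts to order-preserving maps on the algebra letters of each side). -/
def admitsMatching (N : ℕ) (w : Wt N) (bs : List (BInp N)) (as : List (AInp N)) : Prop :=
  ∃ E : List (ASide N × BSide N),
    (∀ pr ∈ E, compat pr.1 pr.2) ∧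
    E.filterMap (fun pr => algA pr.1) = (as.map lettersA).flatten ∧
    (∀ i : ZMod N, (E.map Prod.fst).count (ASide.wPet i) = w.2.1 i) ∧
    ((E.map Prod.fst).count ASide.wTop = w.2.2) ∧
    E.filterMap (fun pr => algB pr.2) = (bs.map lettersB).flatten ∧
    ((E.map Prod.snd).count BSide.w0 = w.1)

/-- Idempotent conditions on the `A`-side. -/
def idemOKA {N : ℕ} (x : ZMod N) (as : List (AInp N)) : Prop :=
  (as.map (fun a => a.2)).Chain' (fun u v => u.finI = v.initI) ∧
  (as = [] ∨ (as.headI.2.initI = x))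

/-- Idempotent conditions on the `B`-side. -/
def idemOKB {N : ℕ} (x : ZMod N) (bs : List (BInp N)) : Prop :=
  (bs.map (fun b => b.2)).Chain' (fun u v => u.finB = v.initB) ∧
  (bs = [] ∨ (bs.headI.2.initB = x))

/-- Final idempotent of the `A`-side (the idempotent of the output generator). -/
def finIA {N : ℕ} (x : ZMod N) (as : List (AInp N)) : ZMod N :=
  if as = [] then x else as.getLastI.2.finI

/-- Final idempotent of the `B`-side. -/
def finIB {N : ℕ} (x : ZMod N) (bs : List (BInp N)) : ZMod N :=
  if bs = [] then x else bs.getLastI.2.finB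

/-- The bimodule operation `m^w_{k|n}(b_k, …, b₁, x, a₁, …, a_n)` of `Y` (the input
lists are written bottom-up, `as = [a₁, …, a_n]` and `bs = [b₁, …, b_k]`): it equals the
generator `y` of `Y` in the common final idempotent exactly when (i) the idempotents
match up, (ii) `m(w) + Σ m(aᵢ) + Σ m(bᵢ) + k + n - 1 = 0`, and (iii) the total Alexander
grading vanishes mod `2` and the weighted input sequence admits a matching; and is zero
otherwise. -/
def mval (N : ℕ) (w : Wt N) (bs : List (BInp N)) (x : ZMod N) (as : List (AInp N)) :
    YF N :=
  if (idemOKA x as ∧ idemOKB x bs ∧ finIA x as = finIB x bs) ∧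
     (mWt N w + ((as.map fun a : AInp N => mdeg N a.1).sum) + ((bs.map fun b : BInp N => mdeg N b.1 + mB b.2).sum)
        + (bs.length : ℤ) + (as.length : ℤ) - 1 = 0) ∧
     (∀ p, (alexWt3 N w p + ((as.map fun a : AInp N => alexMon N a.1 + alexA a.2).sum) p
            + ((bs.map fun b : BInp N => alexMon N b.1 + alexB b.2).sum) p) % 2 = 0) ∧
     admitsMatching N w bs as
  then Finsupp.single (finIA x as) 1 else 0

/-- The weighted operations of `A` on decorated words (the `V`-decorations are central
and factor out); the result is expressed in the decorated-word basis of `A` over `F₂`.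
Weights containing a copy of `w₀` give the zero operation on `A`. -/
def decMuA (N : ℕ) (w2 : Wt N) (seg : List (AInp N)) : AF N :=
  if w2.1 = 0 then
    (muW N (w2.2.1, w2.2.2) (seg.map Prod.snd)).sum fun wrd poly =>
      (AddMonoidAlgebra.coeff poly).sum fun mon c => Finsupp.single (((seg.map Prod.fst).sum + mon, wrd)) c
  else 0

/-- The element `U₀` of `B` in the decorated-word basis. -/
def U0dec (N : ℕ) : BF N :=
  (∑ i ∈ Finset.range N,
    Finsupp.single ((0 : Mon N), BWord.gen (i : ZMod N) (N - 1) false true) (1 : ZMod 2))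
  + ∑ i ∈ Finset.range N,
    Finsupp.single ((0 : Mon N), BWord.gen (i : ZMod N) (N - 1) true false) (1 : ZMod 2)

/-- The operations of `B` on decorated words: the unweighted operations `μ_k` with the
decorations factored out, together with the weighted curvature `μ₀^{w₀} = U₀`; all other
weighted operations of `B` vanish. -/
def decMuB (N : ℕ) (w2 : Wt N) (seg : List (BInp N)) : BF N :=
  if w2 = 0 then
    (muB N (seg.map Prod.snd)).sum fun wrd poly =>
      (AddMonoidAlgebra.coeff poly).sum fun mon c => Finsupp.single (((seg.map Prod.fst).sum + mon, wrd)) c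
  else if w2 = ((1 : ℕ), (0 : ZMod N →₀ ℕ), (0 : ℕ)) ∧ seg = [] then U0dec N
  else 0

/-- The single-edge modifications of a weighted input sequence
`(w; b_k, …, b₁, x, a₁, …, a_n)` of the bimodule `Y`: pulls (replacing an adjacent pair
on one side by its algebra operation value), pushes (removing a weight letter `w_i` from
`w` and inserting `U_i` on the `A`-side for `1 ≤ i ≤ N+1`, or removing `w₀` and
inserting `U₀` on the `B`-side), differentials (replacing some `b_m` by a term of
`μ₁(b_m)`), and splits (factorizations as a composition of two bimodule operations with
weights summing to `w`). -/
inductive EdgeMod (N : ℕ)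
  | pullA (m : ℕ)
  | pullB (m : ℕ)
  | pushPet (i : ZMod N) (p : ℕ)
  | pushTop (p : ℕ)
  | pushW0 (p : ℕ)
  | diffB (m : ℕ) (mon : Mon N) (wrd : BWord N)
  | split (w2 : Wt N) (q p : ℕ)

/-- The value resulting from a single-edge modification. -/
def emv (N : ℕ) (w : Wt N) (bs : List (BInp N)) (x : ZMod N) (as : List (AInp N)) :
    EdgeMod N → YF N
  | .pullA m =>
    match as[m]?, as[m+1]? with
    | some a, some b =>
      (match AWord.mulW a.2 b.2 with
       | some c => mval N w bs x (as.take m ++ (a.1 + b.1, c) :: as.drop (m + 2))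
       | none => 0)
    | _, _ => 0
  | .pullB m =>
    match bs[m]?, bs[m+1]? with
    | some a, some b =>
      (decMuB N 0 [a, b]).sum fun bi c =>
        c • mval N w (bs.take m ++ bi :: bs.drop (m + 2)) x as
    | _, _ => 0
  | .pushPet i p =>
    if 1 ≤ w.2.1 i ∧ p ≤ as.length then
      mval N (w.1, w.2.1 - Finsupp.single i 1, w.2.2) bs x
        (as.take p ++ ((0 : Mon N), AWord.U i 0) :: as.drop p)
    else 0
  | .pushTop p =>
    if 1 ≤ w.2.2 ∧ p ≤ as.length then
      ∑ i ∈ Finset.range N,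
        mval N (w.1, w.2.1, w.2.2 - 1) bs x
          (as.take p ++ ((0 : Mon N), AWord.S (i : ZMod N) (N - 1)) :: as.drop p)
    else 0
  | .pushW0 p =>
    if 1 ≤ w.1 ∧ p ≤ bs.length then
      (U0dec N).sum fun bi c =>
        c • mval N (w.1 - 1, w.2.1, w.2.2) (bs.take p ++ bi :: bs.drop p) x as
    else 0
  | .diffB m mon wrd =>
    match bs[m]? with
    | some b =>
      if mon ∈ ((mu1W N b.2) wrd).support then
        mval N w (bs.take m ++ (b.1 + mon, wrd) :: bs.drop (m + 1)) x as
      else 0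
    | none => 0
  | .split w2 q p =>
    if w2.1 ≤ w.1 ∧ w2.2.1 ≤ w.2.1 ∧ w2.2.2 ≤ w.2.2 ∧ q ≤ bs.length ∧ p ≤ as.length then
      (mval N w2 (bs.take q) x (as.take p)).sum fun y c =>
        c • mval N (w.1 - w2.1, w.2.1 - w2.2.1, w.2.2 - w2.2.2) (bs.drop q) y (as.drop p)
    else 0

section Helpers

open MvPolynomial

variable {N : ℕ}

lemma mdeg_zero : mdeg N 0 = 0 := Finsupp.sum_zero_index

lemma mdeg_add (u v : Mon N) : mdeg N (u + v) = mdeg N u + mdeg N v :=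
  Finsupp.sum_add_index' (by simp) (by intros; push_cast; ring)

lemma mdeg_single (idx : Fin (N + 2)) (e : ℕ) :
    mdeg N (Finsupp.single idx e) = e * mdegVar N idx :=
  Finsupp.sum_single_index (by simp)

lemma mdeg_mem_one {mon : Mon N} (h : mon ∈ (1 : R N).support) : mdeg N mon = 0 := by
  have h2 : mon ∈ ((monomial (0 : Mon N)) (1 : ZMod 2)).support := h
  have := MvPolynomial.support_monomial_subset h2
  simp only [Finset.mem_singleton] at this
  rw [this, mdeg_zero]

lemma mdeg_mem_Vof (hN : 3 ≤ N) (z : ZMod N) {mon : Mon N}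
    (h : mon ∈ (Vof N z).support) : mdeg N mon = -2 := by
  haveI : NeZero N := ⟨by omega⟩
  rw [Vof, MvPolynomial.support_X, Finset.mem_singleton] at h
  have hv : ((Fin.ofNat (N + 2) (z.val + 1 : ℕ) : Fin (N + 2)) : ℕ) = z.val + 1 := by
    rw [Fin.val_ofNat]; exact Nat.mod_eq_of_lt (by have := ZMod.val_lt z; omega)
  rw [h, mdeg_single, mdegVar, hv]
  simp

lemma mdeg_mem_VN1 (hN : 3 ≤ N) {mon : Mon N}
    (h : mon ∈ (VN1 N).support) : mdeg N mon = -2 := by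
  rw [VN1, MvPolynomial.support_X, Finset.mem_singleton] at h
  have hv : ((Fin.ofNat (N + 2) (N + 1 : ℕ) : Fin (N + 2)) : ℕ) = N + 1 := by
    rw [Fin.val_ofNat]; exact Nat.mod_eq_of_lt (by omega)
  rw [h, mdeg_single, mdegVar, hv]
  simp

lemma mdeg_mem_mul {p q : R N} {dp dq : ℤ}
    (hp : ∀ m ∈ p.support, mdeg N m = dp) (hq : ∀ m ∈ q.support, mdeg N m = dq) :
    ∀ mon ∈ (p * q).support, mdeg N mon = dp + dq := by
  classical
  intro mon hm
  have := MvPolynomial.support_mul p q hm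
  rw [Finset.mem_add] at this
  obtain ⟨a, ha, b, hb, rfl⟩ := this
  rw [mdeg_add, hp a ha, hq b hb]

lemma mdeg_mem_prodVof (hN : 3 ≤ N) (m : ℕ) (f : ℕ → ZMod N) :
    ∀ mon ∈ (∏ t ∈ Finset.range m, Vof N (f t)).support, mdeg N mon = -2 * m := by
  induction m with
  | zero => intro mon hm; rw [Finset.range_zero, Finset.prod_empty] at hm
            rw [mdeg_mem_one hm]; simp
  | succ m ih =>
      intro mon hm
      rw [Finset.prod_range_succ] at hm
      have := mdeg_mem_mul ih (fun m hm => mdeg_mem_Vof hN (f _) hm) mon hm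
      rw [this]; push_cast; ring

lemma mdeg_mem_intProd (hN : 3 ≤ N) (i : ZMod N) (l : ℕ) (r lf : Bool) :
    ∀ mon ∈ (intProd N (.gen i l r lf)).support, mdeg N mon = -2 * l := by
  intro mon hm
  exact mdeg_mem_prodVof hN l _ mon hm

end Helpers

section Helpers2

open MvPolynomial

variable {N : ℕ}

/-- `p` is homogeneous of Maslov degree `δ` as element of `B`. -/
def HD (N : ℕ) (p : BMod N) (δ : ℤ) : Prop :=
  ∀ wrd mon, mon ∈ ((p wrd) : R N).support → mdeg N mon + mB wrd = δ

lemma HD_zero {δ : ℤ} : HD N 0 δ := by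
  intro wrd mon hm
  simp only [Finsupp.coe_zero, Pi.zero_apply] at hm
  simp at hm

lemma HD_add {p q : BMod N} {δ : ℤ} (hp : HD N p δ) (hq : HD N q δ) : HD N (p + q) δ := by
  intro wrd mon hm
  rw [MvPolynomial.mem_support_iff] at hm
  rw [Finsupp.add_apply, MvPolynomial.coeff_add] at hm
  rcases (by by_contra hc; push_neg at hc; rw [hc.1, hc.2, add_zero] at hm; exact hm rfl :
      MvPolynomial.coeff mon (p wrd) ≠ 0 ∨ MvPolynomial.coeff mon (q wrd) ≠ 0) with h | h
  · exact hp wrd mon (MvPolynomial.mem_support_iff.mpr h)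
  · exact hq wrd mon (MvPolynomial.mem_support_iff.mpr h)

lemma HD_smul {c : R N} {wb : BWord N} {δ : ℤ}
    (h : ∀ mon ∈ c.support, mdeg N mon + mB wb = δ) : HD N (c • ofB wb) δ := by
  intro wrd mon hm
  rw [Finsupp.smul_apply, ofB, Finsupp.single_apply] at hm
  split_ifs at hm with hw
  · rw [smul_eq_mul, mul_one] at hm
    rw [← hw]
    exact h mon hm
  · rw [smul_eq_mul, mul_zero] at hm
    simp at hm

lemma HD_ofB {wb : BWord N} : HD N (ofB wb) (mB wb) := by
  have : ofB wb = (1 : R N) • ofB wb := (one_smul _ _).symm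
  rw [this]
  exact HD_smul (fun mon hm => by rw [mdeg_mem_one hm, zero_add])

lemma HD_mu1 (hN : 3 ≤ N) (b : BWord N) : HD N (mu1W N b) (mB b - 1) := by
  cases b with
  | idem i => rw [mu1W]; exact HD_zero
  | rho i =>
      rw [mu1W]
      apply HD_smul
      intro mon hm
      rw [mdeg_mem_Vof hN i hm]
      simp [mB]
  | gen i l r lf =>
      rw [mu1W]
      apply HD_add; apply HD_add; apply HD_add
      · split_ifs with h1
        · apply HD_smul
          intro mon hm
          rw [mdeg_mem_Vof hN _ hm, h1]
          cases lf <;> simp [mB] <;> omega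
        · exact HD_zero
      · split_ifs with h1
        · apply HD_smul
          intro mon hm
          rw [mdeg_mem_Vof hN _ hm, h1]
          cases r <;> simp [mB] <;> omega
        · exact HD_zero
      · split_ifs with h1 h2 h3
        · apply HD_smul
          intro mon hm
          rw [mdeg_mem_mul (fun m hm => mdeg_mem_VN1 hN hm)
            (mdeg_mem_prodVof hN (N - 1) _) mon hm, h1.2]
          cases r <;> simp [mB] <;> omega
        · apply HD_smul
          intro mon hm
          rw [mdeg_mem_mul (fun m hm => mdeg_mem_VN1 hN hm)
            (mdeg_mem_prodVof hN (N - 1) _) mon hm, h1.2, h3]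
          simp [mB]
          omega
        · apply HD_smul
          intro mon hm
          rw [mdeg_mem_mul (fun m hm => mdeg_mem_VN1 hN hm)
            (mdeg_mem_prodVof hN (N - 1) _) mon hm, h1.2]
          simp [mB, Bool.not_eq_true] at h3 ⊢
          rw [h3]
          simp
          omega
        · exact HD_zero
      · split_ifs with h1 h2 h3
        · apply HD_smul
          intro mon hm
          rw [mdeg_mem_mul (fun m hm => mdeg_mem_VN1 hN hm)
            (mdeg_mem_prodVof hN (N - 1) _) mon hm, h1.2]
          cases lf <;> simp [mB] <;> omega
        · apply HD_smul
          intro mon hm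
          rw [mdeg_mem_mul (fun m hm => mdeg_mem_VN1 hN hm)
            (mdeg_mem_prodVof hN (N - 1) _) mon hm, h1.2, h3]
          simp [mB]
          omega
        · apply HD_smul
          intro mon hm
          rw [mdeg_mem_mul (fun m hm => mdeg_mem_VN1 hN hm)
            (mdeg_mem_prodVof hN (N - 1) _) mon hm, h1.2]
          simp [mB, Bool.not_eq_true] at h3 ⊢
          rw [h3]
          simp
          omega
        · exact HD_zero

end Helpers2

section Helpers3

open MvPolynomial

variable {N : ℕ}

lemma mulB_mB {x y z : BWord N} (h : BWord.mulB x y = some z) : mB z = mB x + mB y := by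
  cases x with
  | idem i =>
    cases y with
    | idem j =>
      simp only [BWord.mulB] at h; split_ifs at h
      rw [Option.some_inj] at h; subst h; simp [mB]
    | rho j =>
      simp only [BWord.mulB] at h; split_ifs at h
      rw [Option.some_inj] at h; subst h; simp [mB]
    | gen j l r lf =>
      simp only [BWord.mulB] at h; split_ifs at h
      rw [Option.some_inj] at h; subst h; simp [mB]
  | rho i =>
    cases y with
    | idem j =>
      simp only [BWord.mulB] at h; split_ifs at h
      rw [Option.some_inj] at h; subst h; simp [mB]
    | rho j => simp only [BWord.mulB] at h; simp at h
    | gen j l r lf =>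
      simp only [BWord.mulB] at h; split_ifs at h with hc
      rw [Option.some_inj] at h; subst h
      obtain ⟨-, h2⟩ := hc; subst h2
      cases r <;> simp [mB] <;> omega
  | gen a la ra lfa =>
    cases y with
    | idem j =>
      simp only [BWord.mulB] at h; split_ifs at h
      rw [Option.some_inj] at h; subst h; simp [mB]
    | rho j =>
      simp only [BWord.mulB] at h; split_ifs at h with hc
      rw [Option.some_inj] at h; subst h
      obtain ⟨-, h2⟩ := hc; subst h2
      cases lfa <;> simp [mB] <;> omega
    | gen b lb rb lfb =>
      simp only [BWord.mulB] at h; split_ifs at h with hc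
      rw [Option.some_inj] at h; subst h
      obtain ⟨-, h2⟩ := hc
      cases ra <;> cases lfb <;> cases rb <;> cases lfa <;> simp_all [mB] <;> omega

end Helpers3

section Helpers4

open MvPolynomial

variable {N : ℕ}

lemma HD_high2 (hN : 3 ≤ N) (u v : BWord N) (hal : allow N [u, v]) :
    HD N (highVal N [u, v]) (mB u + mB v) := by
  obtain ⟨hlen2, hlenN, hch, htotN, hS12, hlS, hrS, hlfrf, hends⟩ := hal
  obtain ⟨⟨i1, l1, r1, hu⟩, ⟨i2, l2, lf2, hv⟩, hint⟩ := hends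
  simp only [List.headI] at hu
  have hv' : v = BWord.gen i2 l2 false lf2 := by simpa [List.getLastI] using hv
  subst hu hv'
  clear hv hint hch hS12 hlS hrS hlen2 hlenN
  simp only [List.getLastI, List.headI, BWord.lFl, BWord.rFl] at hlfrf
  rw [highVal]
  have htot : totB [BWord.gen i1 l1 r1 false, BWord.gen i2 l2 false lf2]
      = (l1 + 1) + (l2 + 1) := by simp [totB, BWord.lenB]
  rw [htot] at htotN
  by_cases hteq : totB [BWord.gen i1 l1 r1 false, BWord.gen i2 l2 false lf2] = N
  · rw [if_pos hteq]
    rw [htot] at hteq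
    apply HD_smul
    intro mon hm
    have hd := mdeg_mem_mul (fun m hm => mdeg_mem_VN1 hN hm)
        (mdeg_mem_mul (mdeg_mem_intProd hN i1 l1 r1 false)
          (mdeg_mem_mul (mdeg_mem_intProd hN i2 l2 false lf2)
            (fun m hm => mdeg_mem_one hm)) : ∀ m ∈ _, mdeg N m = -2 * l1 + (-2 * l2 + 0))
        mon (by simpa [List.map_cons, List.prod_cons, mul_assoc] using hm)
    rw [hd]
    simp only [List.getLastI, List.headI, BWord.lFl, BWord.rFl]
    split_ifs with hfl
    · rcases hfl with h | h <;> cases r1 <;> cases lf2 <;> simp_all [mB] <;> omega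
    · push_neg at hfl
      cases r1 <;> cases lf2 <;> simp_all [mB] <;> omega
  · rw [if_neg hteq]
    rw [htot] at hteq
    apply HD_add
    · by_cases hg : ¬S2 N [BWord.gen i1 l1 r1 false, BWord.gen i2 l2 false lf2] ∧
        ¬([BWord.gen i1 l1 r1 false, BWord.gen i2 l2 false lf2].headI.rFl)
      · rw [if_pos hg]
        obtain ⟨-, hr⟩ := hg
        simp only [List.headI, BWord.rFl, Bool.not_eq_true] at hr
        subst hr
        rw [botTerm]
        simp only [List.getLastI, List.dropLast, List.map_cons, List.map_nil,
          List.prod_cons, List.prod_nil]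
        have htot1 : totB [BWord.gen i1 l1 false false] = l1 + 1 := by
          simp [totB, BWord.lenB]
        rw [htot1]
        split_ifs with hcond
        · apply HD_smul
          intro mon hm
          have hd := mdeg_mem_mul
            (mdeg_mem_mul (fun m hm => mdeg_mem_VN1 hN hm)
              (mdeg_mem_mul (mdeg_mem_intProd hN i1 l1 false false)
                (fun m hm => mdeg_mem_one hm)) :
                  ∀ m ∈ _, mdeg N m = -2 + (-2 * l1 + 0))
            (mdeg_mem_prodVof hN (N - (l1 + 1) - 1) _) mon hm
          rw [hd]
          cases lf2 <;> simp [mB] <;> omega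
        · exact HD_zero
      · rw [if_neg hg]; exact HD_zero
    · by_cases hg : ¬S1 N [BWord.gen i1 l1 r1 false, BWord.gen i2 l2 false lf2] ∧
        ¬([BWord.gen i1 l1 r1 false, BWord.gen i2 l2 false lf2].getLastI.lFl)
      · rw [if_pos hg]
        obtain ⟨-, hr⟩ := hg
        simp only [List.getLastI, BWord.lFl, Bool.not_eq_true] at hr
        subst hr
        rw [topTerm]
        simp only [List.headI, List.tail_cons, List.map_cons, List.map_nil,
          List.prod_cons, List.prod_nil]
        have htot1 : totB [BWord.gen i2 l2 false false] = l2 + 1 := by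
          simp [totB, BWord.lenB]
        rw [htot1]
        split_ifs with hcond
        · apply HD_smul
          intro mon hm
          have hd := mdeg_mem_mul
            (mdeg_mem_mul (fun m hm => mdeg_mem_VN1 hN hm)
              (mdeg_mem_mul (mdeg_mem_intProd hN i2 l2 false false)
                (fun m hm => mdeg_mem_one hm)) :
                  ∀ m ∈ _, mdeg N m = -2 + (-2 * l2 + 0))
            (mdeg_mem_prodVof hN (N - (l2 + 1) - 1) _) mon hm
          rw [hd]
          cases r1 <;> simp [mB] <;> omega
        · exact HD_zero
      · rw [if_neg hg]; exact HD_zero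

lemma HD_muB2 (hN : 3 ≤ N) (u v : BWord N) : HD N (muB N [u, v]) (mB u + mB v) := by
  rw [muB]
  norm_num
  apply HD_add
  · simp only [List.getLastI, List.headI]
    cases hmm : BWord.mulB v u with
    | none => exact HD_zero
    | some z =>
        simp only [Option.elim]
        rw [show mB u + mB v = mB z from by rw [mulB_mB hmm]; ring]
        exact HD_ofB
  · split_ifs with hal
    · exact HD_high2 hN u v hal
    · exact HD_zero

end Helpers4

section Helpers5

open MvPolynomial

variable {N : ℕ}

lemma mval_grading {w : Wt N} {bs : List (BInp N)} {x : ZMod N} {as : List (AInp N)}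
    (h : mval N w bs x as ≠ 0) :
    mWt N w + ((as.map fun a : AInp N => mdeg N a.1).sum)
      + ((bs.map fun b : BInp N => mdeg N b.1 + mB b.2).sum)
      + (bs.length : ℤ) + (as.length : ℤ) - 1 = 0 := by
  rw [mval] at h
  split_ifs at h with hc
  · exact hc.2.1
  · exact absurd rfl h

lemma finsupp_sum_ne {α M β : Type*} [Zero M] [AddCommMonoid β] (f : α →₀ M)
    (g : α → M → β) (h : f.sum g ≠ 0) : ∃ a ∈ f.support, g a (f a) ≠ 0 := by
  by_contra hc
  push_neg at hc
  exact h (Finset.sum_eq_zero hc)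

lemma finset_sum_ne {α β : Type*} [AddCommMonoid β] (s : Finset α) (f : α → β)
    (h : ∑ a ∈ s, f a ≠ 0) : ∃ a ∈ s, f a ≠ 0 := by
  by_contra hc
  push_neg at hc
  exact h (Finset.sum_eq_zero hc)

lemma list_decomp1 {α : Type*} {l : List α} {m : ℕ} {a : α} (h : l[m]? = some a) :
    l = l.take m ++ a :: l.drop (m + 1) := by
  obtain ⟨hm, heq⟩ := List.getElem?_eq_some_iff.mp h
  conv_lhs => rw [← List.take_append_drop m l, List.drop_eq_getElem_cons hm, heq]

lemma list_decomp2 {α : Type*} {l : List α} {m : ℕ} {a b : α}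
    (h1 : l[m]? = some a) (h2 : l[m + 1]? = some b) :
    l = l.take m ++ a :: b :: l.drop (m + 2) := by
  obtain ⟨hm, heq⟩ := List.getElem?_eq_some_iff.mp h1
  obtain ⟨hm2, heq2⟩ := List.getElem?_eq_some_iff.mp h2
  conv_lhs => rw [← List.take_append_drop m l, List.drop_eq_getElem_cons hm, heq,
    List.drop_eq_getElem_cons hm2, heq2]

lemma insert_map_sum {α : Type*} (f : α → ℤ) (l : List α) (p : ℕ) (y : α) :
    ((l.take p ++ y :: l.drop p).map f).sum = f y + (l.map f).sum := by
  rw [List.map_append, List.map_cons, List.sum_append, List.sum_cons]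
  conv_rhs => rw [← List.take_append_drop p l, List.map_append, List.sum_append]
  ring

lemma insert_len {α : Type*} (l : List α) (p : ℕ) (hp : p ≤ l.length) (y : α) :
    (l.take p ++ y :: l.drop p).length = l.length + 1 := by
  simp [List.length_take, List.length_drop]
  omega

lemma split_map_sum {α : Type*} (f : α → ℤ) (l : List α) (q : ℕ) :
    ((l.take q).map f).sum + ((l.drop q).map f).sum = (l.map f).sum := by
  conv_rhs => rw [← List.take_append_drop q l]
  simp [List.sum_append]

lemma split_len {α : Type*} (l : List α) (q : ℕ) (hq : q ≤ l.length) :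
    (l.take q).length + (l.drop q).length = l.length := by
  simp [List.length_take, List.length_drop]
  omega

lemma wS_add (f g : ZMod N →₀ ℕ) :
    ((f + g).sum fun _ k => (k : ℤ)) = (f.sum fun _ k => (k : ℤ)) + (g.sum fun _ k => (k : ℤ)) :=
  Finsupp.sum_add_index' (by simp) (by intros; push_cast; ring)

lemma wS_sub {f g : ZMod N →₀ ℕ} (h : g ≤ f) :
    ((f - g).sum fun _ k => (k : ℤ)) = (f.sum fun _ k => (k : ℤ)) - (g.sum fun _ k => (k : ℤ)) := by
  have h2 : (f - g) + g = f := tsub_add_cancel_of_le h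
  have h3 := wS_add (f - g) g
  rw [h2] at h3
  linarith

lemma wS_single (i : ZMod N) : ((Finsupp.single i (1 : ℕ)).sum fun _ k => (k : ℤ)) = 1 :=
  Finsupp.sum_single_index (by simp)

lemma mWt_pet {w : Wt N} {i : ZMod N} (h : 1 ≤ w.2.1 i) :
    mWt N (w.1, w.2.1 - Finsupp.single i 1, w.2.2) = mWt N w - 2 := by
  rw [mWt, mWt]
  simp only
  rw [wS_sub (Finsupp.single_le_iff.mpr h), wS_single]
  ring

lemma mWt_top {w : Wt N} (h : 1 ≤ w.2.2) :
    mWt N (w.1, w.2.1, w.2.2 - 1) = mWt N w - 2 := by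
  rw [mWt, mWt]
  simp only
  rw [Nat.cast_sub h]
  push_cast
  ring

lemma mWt_w0 {w : Wt N} (h : 1 ≤ w.1) :
    mWt N (w.1 - 1, w.2.1, w.2.2) = mWt N w + (2 * N - 2) := by
  rw [mWt, mWt]
  simp only
  rw [Nat.cast_sub h]
  push_cast
  ring

lemma mWt_split {w w2 : Wt N} (h1 : w2.1 ≤ w.1) (h2 : w2.2.1 ≤ w.2.1) (h3 : w2.2.2 ≤ w.2.2) :
    mWt N (w.1 - w2.1, w.2.1 - w2.2.1, w.2.2 - w2.2.2) = mWt N w - mWt N w2 := by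
  rw [mWt, mWt, mWt]
  simp only
  rw [wS_sub h2, Nat.cast_sub h1, Nat.cast_sub h3]
  push_cast
  ring

lemma U0dec_mem (hN : 3 ≤ N) {p : BInp N} (hp : p ∈ (U0dec N).support) :
    mdeg N p.1 + mB p.2 = -2 * N := by
  have hne := Finsupp.mem_support_iff.mp hp
  have hshape : ∃ i : ℕ, i < N ∧
      (p = ((0 : Mon N), BWord.gen (i : ZMod N) (N - 1) false true) ∨
       p = ((0 : Mon N), BWord.gen (i : ZMod N) (N - 1) true false)) := by
    by_contra hc
    push_neg at hc
    apply hne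
    rw [U0dec, Finsupp.add_apply, Finsupp.finset_sum_apply, Finsupp.finset_sum_apply]
    rw [Finset.sum_eq_zero, Finset.sum_eq_zero, add_zero]
    · intro i hi
      rw [Finsupp.single_apply, if_neg]
      intro hq
      exact (hc i (Finset.mem_range.mp hi)).2 hq.symm
    · intro i hi
      rw [Finsupp.single_apply, if_neg]
      intro hq
      exact (hc i (Finset.mem_range.mp hi)).1 hq.symm
  obtain ⟨i, hi, hcase⟩ := hshape
  rcases hcase with h | h <;> subst h <;> simp [mdeg_zero, mB] <;> omega

lemma decMuB2_deg (hN : 3 ≤ N) (a b : BInp N) {bi : BInp N}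
    (hbi : bi ∈ (decMuB N 0 [a, b]).support) :
    mdeg N bi.1 + mB bi.2 = (mdeg N a.1 + mB a.2) + (mdeg N b.1 + mB b.2) := by
  rw [decMuB, if_pos rfl] at hbi
  have h1 := Finsupp.support_sum hbi
  rw [Finset.mem_biUnion] at h1
  obtain ⟨wrd, hwrd, h2⟩ := h1
  have h3 := Finsupp.support_sum h2
  rw [Finset.mem_biUnion] at h3
  obtain ⟨mon, hmon, h4⟩ := h3
  have h5 := Finsupp.support_single_subset h4
  rw [Finset.mem_singleton] at h5
  subst h5
  have hdeg := HD_muB2 hN a.2 b.2 wrd mon hmon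
  simp only [List.map_cons, List.map_nil, List.sum_cons, List.sum_nil]
  rw [mdeg_add, mdeg_add, mdeg_add, mdeg_zero]
  linarith [hdeg]

end Helpers5

/-- Grading law for nontrivial bimodule relation terms (Lemma 6.5):
if some single-edge modification of the weighted input sequence
`(w; b_k, …, b₁, x, a₁, …, a_n)` yields a nonzero bimodule operation (resp. a
composition of nonzero bimodule operations), then
`m(w) + Σ m(aᵢ) + Σ m(bᵢ) + k + n - 1 = 1`. -/
theorem grading_of_nontrivial_terms (N : ℕ) (hN : 3 ≤ N) (w : Wt N)
    (bs : List (BInp N)) (x : ZMod N) (as : List (AInp N))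
    (e : EdgeMod N) (he : emv N w bs x as e ≠ 0) :
    mWt N w + ((as.map fun a : AInp N => mdeg N a.1).sum)
      + ((bs.map fun b : BInp N => mdeg N b.1 + mB b.2).sum)
      + (bs.length : ℤ) + (as.length : ℤ) - 1 = 1 := by
  cases e with
  | pullA m =>
      simp only [emv] at he
      split at he
      · rename_i a b heq1 heq2
        split at he
        · rename_i c heqc
          have hg := mval_grading he
          have hAs := list_decomp2 heq1 heq2
          rw [hAs]
          simp only [List.map_append, List.map_cons, List.sum_append, List.sum_cons,
            List.length_append, List.length_cons] at hg ⊢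
          rw [mdeg_add] at hg
          push_cast at hg ⊢
          linarith
        · exact absurd rfl he
      · exact absurd rfl he
  | pullB m =>
      simp only [emv] at he
      split at he
      · rename_i a b heq1 heq2
        obtain ⟨bi, hbi, hne⟩ := finsupp_sum_ne _ _ he
        have hne2 : mval N w (bs.take m ++ bi :: bs.drop (m + 2)) x as ≠ 0 := by
          intro h0; rw [h0] at hne; simp at hne
        have hg := mval_grading hne2
        have hdeg := decMuB2_deg hN a b hbi
        have hBs := list_decomp2 heq1 heq2
        rw [hBs]
        simp only [List.map_append, List.map_cons, List.sum_append, List.sum_cons,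
          List.length_append, List.length_cons] at hg ⊢
        push_cast at hg ⊢
        linarith
      · exact absurd rfl he
  | pushPet i p =>
      simp only [emv] at he
      split at he
      · rename_i hcond
        have hg := mval_grading he
        have hw := mWt_pet (w := w) (i := i) hcond.1
        rw [hw, insert_map_sum (fun a : AInp N => mdeg N a.1) as p ((0 : Mon N), AWord.U i 0),
          insert_len as p hcond.2 ((0 : Mon N), AWord.U i 0)] at hg
        simp only [mdeg_zero] at hg
        push_cast at hg ⊢
        linarith
      · exact absurd rfl he
  | pushTop p =>
      simp only [emv] at he
      split at he
      · rename_i hcond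
        obtain ⟨i, hi, hne⟩ := finset_sum_ne _ _ he
        have hg := mval_grading hne
        have hw := mWt_top (w := w) hcond.1
        rw [hw, insert_map_sum (fun a : AInp N => mdeg N a.1) as p
            ((0 : Mon N), AWord.S (i : ZMod N) (N - 1)),
          insert_len as p hcond.2 ((0 : Mon N), AWord.S (i : ZMod N) (N - 1))] at hg
        simp only [mdeg_zero] at hg
        push_cast at hg ⊢
        linarith
      · exact absurd rfl he
  | pushW0 p =>
      simp only [emv] at he
      split at he
      · rename_i hcond
        obtain ⟨bi, hbi, hne⟩ := finsupp_sum_ne _ _ he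
        have hne2 : mval N (w.1 - 1, w.2.1, w.2.2) (bs.take p ++ bi :: bs.drop p) x as ≠ 0 := by
          intro h0; rw [h0] at hne; simp at hne
        have hg := mval_grading hne2
        have hw := mWt_w0 (w := w) hcond.1
        have hdeg := U0dec_mem hN hbi
        rw [hw, insert_map_sum (fun b : BInp N => mdeg N b.1 + mB b.2) bs p bi,
          insert_len bs p hcond.2 bi] at hg
        push_cast at hg ⊢
        linarith
      · exact absurd rfl he
  | diffB m mon wrd =>
      simp only [emv] at he
      split at he
      · rename_i b heqb
        split at he
        · rename_i hmem
          have hg := mval_grading he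
          have hdeg := HD_mu1 hN b.2 wrd mon hmem
          have hBs := list_decomp1 heqb
          rw [hBs]
          simp only [List.map_append, List.map_cons, List.sum_append, List.sum_cons,
            List.length_append, List.length_cons] at hg ⊢
          rw [mdeg_add] at hg
          push_cast at hg ⊢
          linarith
        · exact absurd rfl he
      · exact absurd rfl he
  | split w2 q p =>
      simp only [emv] at he
      split at he
      · rename_i hcond
        obtain ⟨h1, h2, h3, hq, hp⟩ := hcond
        obtain ⟨y, hy, hne⟩ := finsupp_sum_ne _ _ he
        have hA : mval N w2 (bs.take q) x (as.take p) ≠ 0 := by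
          intro h0; rw [h0] at hy; simp at hy
        have hB : mval N (w.1 - w2.1, w.2.1 - w2.2.1, w.2.2 - w2.2.2) (bs.drop q) y
            (as.drop p) ≠ 0 := by
          intro h0; rw [h0] at hne; simp at hne
        have hg1 := mval_grading hA
        have hg2 := mval_grading hB
        have hw := mWt_split (w := w) (w2 := w2) h1 h2 h3
        have hsa := split_map_sum (fun a : AInp N => mdeg N a.1) as p
        have hsb := split_map_sum (fun b4 : BInp N => mdeg N b4.1 + mB b4.2) bs q
        have hla := split_len as p hp
        have hlb := split_len bs q hq
        rw [hw] at hg2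
        rw [← hsa, ← hsb, ← hla, ← hlb]
        push_cast at hg1 hg2 ⊢
        linarith
      · exact absurd rfl he


end StarPaper
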